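/- Let ξ:[0,∞)→[0,∞) be convex, strictly increasing with ξ(0)=0 and right derivative ξ'(0)=0, and of superlinear growth. Then there exists a continuous, increasing function φ:[0,∞)→[0,∞) with φ(0)=0 and φ(y)→∞ as y→∞ such that, setting Δ^L(v) = −1−φ(v²), the inequality φ(v²)v² ≤ Δ^L(v)(L(s₂/s₁)−v²) + L(s₂) − L(s₁) + ξ(|L(s₁)|) + ξ(|L(s₂)|) holds for all s₁,s₂>0 and v≥0. -/

import Mathlib

open MeasureTheory Set Filter

noncomputable section

/-- The log-contract payoff `L(x) = -(2/τ) ln x`. -/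
def Lf (τ x : ℝ) : ℝ := -(2 / τ) * Real.log x

theorem exists_hedge_for_vix_power (τ : ℝ) (hτ : 0 < τ)
    (ξ : ℝ → ℝ)
    (hξ_cvx : ConvexOn ℝ (Set.Ici 0) ξ)
    (hξ_mono : StrictMonoOn ξ (Set.Ici 0))
    (hξ_nonneg : ∀ x : ℝ, 0 ≤ x → 0 ≤ ξ x)
    (hξ_zero : ξ 0 = 0)
    (hξ_deriv0 : Tendsto (fun x => ξ x / x) (nhdsWithin 0 (Set.Ioi 0)) (nhds 0))
    (hξ_superlin : Tendsto (fun x => ξ x / x) atTop atTop) :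
    ∃ φ : ℝ → ℝ,
      ContinuousOn φ (Set.Ici 0) ∧
      MonotoneOn φ (Set.Ici 0) ∧
      (∀ y : ℝ, 0 ≤ y → 0 ≤ φ y) ∧
      φ 0 = 0 ∧
      Tendsto φ atTop atTop ∧
      ∀ s₁ s₂ v : ℝ, 0 < s₁ → 0 < s₂ → 0 ≤ v →
        φ (v ^ 2) * v ^ 2 ≤
          (-1 - φ (v ^ 2)) * (Lf τ (s₂ / s₁) - v ^ 2)
            + Lf τ s₂ - Lf τ s₁ + ξ |Lf τ s₁| + ξ |Lf τ s₂| := by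
  set S : ℝ → Set ℝ := fun y => (fun t => (y / 2 + ξ t) / t) '' Set.Ioi 0 with hS
  set φ : ℝ → ℝ := fun y => sInf (S y) with hφ
  have hne : ∀ y : ℝ, (S y).Nonempty := fun y => ⟨(y / 2 + ξ 1) / 1, 1, Set.mem_Ioi.mpr one_pos, rfl⟩
  have hlb : ∀ y : ℝ, 0 ≤ y → ∀ z ∈ S y, 0 ≤ z := by
    intro y hy z hz
    obtain ⟨t, ht, rfl⟩ := hz
    exact div_nonneg (by linarith [hξ_nonneg t ht.le]) ht.le
  have hbdd : ∀ y : ℝ, 0 ≤ y → BddBelow (S y) := fun y hy => ⟨0, hlb y hy⟩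
  have hnonneg : ∀ y : ℝ, 0 ≤ y → 0 ≤ φ y := fun y hy => le_csInf (hne y) (hlb y hy)
  have hle : ∀ y : ℝ, 0 ≤ y → ∀ t : ℝ, 0 < t → φ y ≤ (y / 2 + ξ t) / t := by
    intro y hy t ht
    exact csInf_le (hbdd y hy) ⟨t, ht, rfl⟩
  have hkey : ∀ y : ℝ, 0 ≤ y → ∀ t : ℝ, 0 ≤ t → φ y * t ≤ y / 2 + ξ t := by
    intro y hy t ht
    rcases ht.eq_or_lt with rfl | ht
    · simp [hξ_zero]; linarith
    · exact (le_div_iff₀ ht).mp (hle y hy t ht)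
  have hmono : MonotoneOn φ (Set.Ici 0) := by
    intro y1 h1 y2 h2 h12
    refine le_csInf (hne y2) ?_
    rintro z ⟨t, ht, rfl⟩
    have ht' : (0:ℝ) < t := ht
    refine (hle y1 h1 t ht').trans ?_
    exact (div_le_div_iff_of_pos_right ht').mpr (by linarith)
  have hzero : φ 0 = 0 := by
    refine le_antisymm ?_ (hnonneg 0 le_rfl)
    refine le_of_forall_pos_le_add ?_
    intro ε hε
    have h1 : ∀ᶠ t in nhdsWithin (0:ℝ) (Set.Ioi 0), ξ t / t < ε :=
      hξ_deriv0.eventually (gt_mem_nhds hε)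
    obtain ⟨t, htε, ht⟩ := (h1.and self_mem_nhdsWithin).exists
    have := hle 0 le_rfl t ht
    simp only [zero_div, zero_add] at this
    linarith
  have htop : Tendsto φ atTop atTop := by
    rw [tendsto_atTop]
    intro M
    set M' : ℝ := max M 1 with hM'
    have hM'pos : 0 < M' := lt_of_lt_of_le one_pos (le_max_right _ _)
    obtain ⟨T, hT⟩ := (hξ_superlin.eventually_ge_atTop M').exists_forall_of_atTop
    set T' : ℝ := max T 1 with hT'
    have hT'pos : 0 < T' := lt_of_lt_of_le one_pos (le_max_right _ _)
    filter_upwards [eventually_ge_atTop (2 * T' * M'), eventually_ge_atTop (0:ℝ)] with y hy hy0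
    refine le_trans (le_max_left M 1) (le_csInf (hne y) ?_)
    rintro z ⟨t, ht, rfl⟩
    have hξt : 0 ≤ ξ t := hξ_nonneg t ht.le
    rcases le_or_gt T' t with h | h
    · have : M' ≤ ξ t / t := hT t (le_trans (le_max_left T 1) h)
      have : M' * t ≤ ξ t := (le_div_iff₀ ht).mp this
      rw [le_div_iff₀ ht]
      nlinarith
    · rw [le_div_iff₀ ht]
      nlinarith
  have hconc : ConcaveOn ℝ (Set.Ici 0) φ := by
    refine ⟨convex_Ici 0, ?_⟩
    intro x hx y hy a b ha hb hab
    simp only [smul_eq_mul]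
    refine le_csInf (hne _) ?_
    rintro z ⟨t, ht, rfl⟩
    have e1 := hle x hx t ht
    have e2 := hle y hy t ht
    have : a * φ x + b * φ y ≤ a * ((x / 2 + ξ t) / t) + b * ((y / 2 + ξ t) / t) := by
      gcongr
    refine this.trans (le_of_eq ?_)
    have ht0 : t ≠ 0 := ne_of_gt ht
    field_simp
    linear_combination (ξ t * 2) * hab
  have hcont : ContinuousOn φ (Set.Ici 0) := by
    intro x hx
    rcases (Set.mem_Ici.mp hx).eq_or_lt with rfl | hx0
    · -- continuity at 0 within Ici 0
      have : Tendsto φ (nhdsWithin 0 (Set.Ici 0)) (nhds 0) := by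
        rw [tendsto_order]
        constructor
        · intro c hc
          filter_upwards [self_mem_nhdsWithin] with y hy
          exact lt_of_lt_of_le hc (hnonneg y hy)
        · intro c hc
          have h1 : ∀ᶠ t in nhdsWithin (0:ℝ) (Set.Ioi 0), ξ t / t < c / 2 :=
            hξ_deriv0.eventually (gt_mem_nhds (by linarith))
          obtain ⟨t, htc, ht⟩ := (h1.and self_mem_nhdsWithin).exists
          have hmem : Set.Iio (c * t) ∈ nhdsWithin (0:ℝ) (Set.Ici 0) :=
            nhdsWithin_le_nhds (Iio_mem_nhds (by positivity))
          filter_upwards [hmem, self_mem_nhdsWithin] with y hyc hy0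
          have := hle y hy0 t ht
          have h2 : (y / 2 + ξ t) / t = y / (2 * t) + ξ t / t := by field_simp
          rw [h2] at this
          have : φ y ≤ y / (2 * t) + c / 2 := by linarith
          have hyt : y / (2 * t) < c / 2 := by
            rw [div_lt_iff₀ (by positivity)]
            calc y < c * t := hyc
            _ = c / 2 * (2 * t) := by ring
          linarith
      unfold ContinuousWithinAt
      rwa [hzero]
    · have hint : ContinuousOn φ (interior (Set.Ici (0:ℝ))) := hconc.continuousOn_interior
      rw [interior_Ici] at hint
      exact ((hint x hx0).continuousAt (isOpen_Ioi.mem_nhds hx0)).continuousWithinAt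
  refine ⟨φ, hcont, hmono, hnonneg, hzero, htop, ?_⟩
  intro s₁ s₂ v h1 h2 hv
  have hLdiv : Lf τ (s₂ / s₁) = Lf τ s₂ - Lf τ s₁ := by
    unfold Lf
    rw [Real.log_div h2.ne' h1.ne']
    ring
  rw [hLdiv]
  set a := Lf τ s₁
  set b := Lf τ s₂
  set y := v ^ 2 with hy
  have hy0 : 0 ≤ y := sq_nonneg v
  have ka := hkey y hy0 |a| (abs_nonneg a)
  have kb := hkey y hy0 |b| (abs_nonneg b)
  have hφy := hnonneg y hy0
  have hba : b - a ≤ |a| + |b| := by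
    have := le_abs_self b
    have := neg_abs_le a
    linarith
  nlinarith [mul_le_mul_of_nonneg_left hba hφy]
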